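/- Fix a real w ≥ 4 and an integer k ≥ 0, and let K = 2^k. Define r = (w+√(w²−4w))^{1+1/K}/(2^{1/K}·(w+√(w²−4w)−2)) if w ≤ (1+K)²/K, and r = (1+K)^{1+1/K}/K if w ≥ (1+K)²/K (real powers of positive reals). Then there exist K online bidding strategies X_a : ℕ → ℝ, indexed by a ∈ {0,…,K−1} (each with X_a(0) = 1, strictly increasing, and tending to +∞), together with an advice function adv : {u : ℝ | u ≥ 1} → {0,…,K−1}, such that: (i) for every a and every u ≥ 1, cost(X_a, u) ≤ w·u; and (ii) for every u ≥ 1, cost(X_{adv(u)}, u) ≤ r·u. That is, with k bits of advice there is an (r, w)-competitive bidding strategy. -/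

import Mathlib

open scoped Classical in
/-- The cost of a bidding strategy `x` on a hidden value `u`: the sum
`∑_{j=1}^{i} x j` where `i` is the least index with `x i ≥ u` (and `0` if no
such index exists, which never happens for strategies tending to infinity). -/
noncomputable def bidCost (x : ℕ → ℝ) (u : ℝ) : ℝ :=
  if h : ∃ i : ℕ, u ≤ x i then ∑ j ∈ Finset.Icc 1 (Nat.find h), x j else 0

set_option maxHeartbeats 1000000

open Finset Filter

lemma geomIcc (β : ℝ) (hβ : β ≠ 1) (i : ℕ) :
    ∑ j ∈ Finset.Icc 1 i, β ^ (j - 1) = (β ^ i - 1) / (β - 1) := by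
  have hb : β - 1 ≠ 0 := sub_ne_zero.mpr hβ
  induction i with
  | zero => simp
  | succ n ih =>
    rw [Finset.sum_Icc_succ_top (by omega), ih]
    simp only [Nat.add_sub_cancel]
    field_simp
    ring

lemma bidding_aux (w : ℝ) (hw : 4 ≤ w) (K : ℕ) (hK : 0 < K) (β r : ℝ)
    (hβ2 : 2 ≤ β) (hβw : β ^ 2 / (β - 1) ≤ w)
    (hr : r = β ^ ((1 : ℝ) / K) * β / (β - 1)) :
    ∃ (X : Fin K → ℕ → ℝ) (adv : ℝ → Fin K),
      (∀ a : Fin K,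
        X a 0 = 1 ∧ StrictMono (X a) ∧ Filter.Tendsto (X a) Filter.atTop Filter.atTop) ∧
      (∀ (a : Fin K) (u : ℝ), 1 ≤ u → bidCost (X a) u ≤ w * u) ∧
      (∀ u : ℝ, 1 ≤ u → bidCost (X (adv u)) u ≤ r * u) := by
  have hβ1 : (1 : ℝ) < β := by linarith
  have hβ0 : (0 : ℝ) < β := by linarith
  have hβ1' : (0 : ℝ) < β - 1 := by linarith
  set q : ℝ := β ^ ((1 : ℝ) / K) with hqdef
  have hq1 : 1 < q := by
    rw [hqdef]
    apply Real.one_lt_rpow_iff_of_pos hβ0 |>.mpr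
    exact Or.inl ⟨hβ1, by positivity⟩
  have hq0 : 0 < q := by linarith
  have hqK : q ^ K = β := by
    rw [hqdef, ← Real.rpow_natCast (β ^ ((1:ℝ)/K)) K, ← Real.rpow_mul hβ0.le,
      one_div_mul_cancel (by exact_mod_cast hK.ne'), Real.rpow_one]
  have hr0 : 1 < r := by
    rw [hr]
    rw [lt_div_iff₀ hβ1']
    nlinarith
  -- the strategies
  set X : Fin K → ℕ → ℝ := fun a j => if j = 0 then 1 else r * q ^ (a : ℕ) * β ^ (j - 1)
    with hX
  have hXpos : ∀ a j, 0 < X a j := by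
    intro a j
    rw [hX]
    dsimp only
    split <;> positivity
  have hX0 : ∀ a, X a 0 = 1 := fun a => rfl
  have hXs : ∀ (a : Fin K) (j : ℕ), 1 ≤ j → X a j = r * q ^ (a:ℕ) * β ^ (j - 1) := by
    intro a j hj
    rw [hX]
    simp [(by omega : j ≠ 0)]
    intro h; omega
  have hmono : ∀ a, StrictMono (X a) := by
    intro a
    apply strictMono_nat_of_lt_succ
    intro j
    rcases Nat.eq_zero_or_pos j with h | h
    · subst h
      rw [hX0, hXs a 1 le_rfl]
      simp only [Nat.sub_self, pow_zero, mul_one]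
      have : (1:ℝ) ≤ q ^ (a:ℕ) := one_le_pow₀ hq1.le
      nlinarith
    · rw [hXs a j h, hXs a (j+1) (by omega)]
      have : j + 1 - 1 = (j - 1) + 1 := by omega
      rw [this, pow_succ]
      have h1 : 0 < r * q ^ (a:ℕ) * β ^ (j-1) := by positivity
      nlinarith
  have htend : ∀ a, Tendsto (X a) atTop atTop := by
    intro a
    have h1 : Tendsto (fun j : ℕ => β ^ (j - 1)) atTop atTop :=
      (tendsto_pow_atTop_atTop_of_one_lt hβ1).comp (tendsto_sub_atTop_nat 1)
    apply tendsto_atTop_mono' atTop ?_ h1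
    filter_upwards [eventually_ge_atTop 1] with j hj
    rw [hXs a j hj]
    have h2 : (1:ℝ) ≤ r * q ^ (a:ℕ) := by
      have : (1:ℝ) ≤ q ^ (a:ℕ) := one_le_pow₀ hq1.le
      nlinarith
    nlinarith [pow_pos hβ0 (j-1), le_mul_of_one_le_left (pow_pos hβ0 (j-1)).le h2]
  -- cost formula
  have hex : ∀ (a : Fin K) (u : ℝ), ∃ i : ℕ, u ≤ X a i := by
    intro a u
    exact ((htend a).eventually (eventually_ge_atTop u)).exists
  have hcost : ∀ (a : Fin K) (u : ℝ) (h : ∃ i : ℕ, u ≤ X a i),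
      bidCost (X a) u = r * q ^ (a:ℕ) * ((β ^ (Nat.find h) - 1) / (β - 1)) := by
    intro a u h
    rw [bidCost, dif_pos h]
    rw [Finset.sum_congr rfl (fun j hj => hXs a j (Finset.mem_Icc.mp hj).1),
      ← Finset.mul_sum, geomIcc β hβ1.ne' _]
  -- untrusted bound
  have huntrusted : ∀ (a : Fin K) (u : ℝ), 1 ≤ u → bidCost (X a) u ≤ w * u := by
    intro a u hu
    have h := hex a u
    rw [hcost a u h]
    rcases Nat.lt_or_ge (Nat.find h) 1 with h1 | h1
    · have : Nat.find h = 0 := by omega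
      rw [this]
      simp only [pow_zero, sub_self, zero_div, mul_zero]
      nlinarith
    rcases Nat.lt_or_ge (Nat.find h) 2 with h2 | h2
    · -- find = 1
      have hi1 : Nat.find h = 1 := by omega
      rw [hi1, pow_one]
      have hdd : (β - 1) / (β - 1) = 1 := div_self hβ1'.ne'
      rw [hdd, mul_one]
      have ha : (a : ℕ) ≤ K - 1 := by have := a.isLt; omega
      have hqa : q ^ (a:ℕ) ≤ q ^ (K - 1) := pow_le_pow_right₀ hq1.le ha
      have hqq : q * q ^ (K - 1) = β := by
        rw [← pow_succ']
        have : K - 1 + 1 = K := by omega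
        rw [this, hqK]
      have hkey : r * q ^ (K-1) = β ^ 2 / (β - 1) := by
        rw [hr]
        field_simp
        nlinarith [hqq]
      have : r * q ^ (a:ℕ) ≤ β ^ 2 / (β - 1) := by
        rw [← hkey]
        have : 0 < r := by linarith
        nlinarith
      nlinarith
    · -- find ≥ 2
      have hlt : X a (Nat.find h - 1) < u := not_le.mp (Nat.find_min h (by omega))
      rw [hXs a (Nat.find h - 1) (by omega)] at hlt
      have he : Nat.find h - 1 - 1 = Nat.find h - 2 := by omega
      rw [he] at hlt
      have hpow : β ^ (Nat.find h) = β ^ 2 * β ^ (Nat.find h - 2) := by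
        rw [← pow_add]
        congr 1
        omega
      have hw2 : β ^ 2 ≤ w * (β - 1) := (div_le_iff₀ hβ1').mp hβw
      have hP : (0:ℝ) < r * q ^ (a:ℕ) * β ^ (Nat.find h - 2) := by positivity
      rw [show r * q ^ (a:ℕ) * ((β ^ (Nat.find h) - 1) / (β - 1))
          = r * q ^ (a:ℕ) * (β ^ (Nat.find h) - 1) / (β - 1) from by ring,
        div_le_iff₀ hβ1']
      have hc1 : r * q ^ (a:ℕ) * (β ^ (Nat.find h)) = β ^ 2 * (r * q ^ (a:ℕ) * β ^ (Nat.find h - 2)) := by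
        rw [hpow]; ring
      have hc2 : β ^ 2 * (r * q ^ (a:ℕ) * β ^ (Nat.find h - 2))
          ≤ (w * (β - 1)) * (r * q ^ (a:ℕ) * β ^ (Nat.find h - 2)) :=
        mul_le_mul_of_nonneg_right hw2 hP.le
      have hc3 : (w * (β - 1)) * (r * q ^ (a:ℕ) * β ^ (Nat.find h - 2)) < (w * (β-1)) * u := by
        apply mul_lt_mul_of_pos_left hlt
        nlinarith
      have hpos : (0:ℝ) < r * q ^ (a:ℕ) := by positivity
      linarith
  -- advice
  have hgex : ∀ u : ℝ, ∃ m : ℕ, u ≤ r * q ^ m := by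
    intro u
    obtain ⟨m, hm⟩ := pow_unbounded_of_one_lt u hq1
    exact ⟨m, le_trans hm.le (le_mul_of_one_le_left (pow_pos hq0 m).le hr0.le)⟩
  set adv : ℝ → Fin K := fun u =>
    ⟨Nat.find (hgex u) % K, Nat.mod_lt _ hK⟩ with hadvdef
  refine ⟨X, adv, fun a => ⟨hX0 a, hmono a, htend a⟩, huntrusted, ?_⟩
  intro u hu
  set m := Nat.find (hgex u) with hm
  have hadv : ((adv u : Fin K) : ℕ) = m % K := rfl
  set t := m / K with ht
  have hmt : ((adv u : Fin K) : ℕ) + t * K = m := by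
    rw [hadv, ht]
    exact Nat.mod_add_div' m K
  have hqm : q ^ ((adv u : Fin K) : ℕ) * β ^ t = q ^ m := by
    calc q ^ ((adv u : Fin K):ℕ) * β ^ t = q ^ ((adv u : Fin K):ℕ) * (q ^ K) ^ t := by rw [hqK]
    _ = q ^ (((adv u : Fin K):ℕ) + K * t) := by rw [← pow_mul, ← pow_add]
    _ = q ^ m := by rw [hadv, ht]; congr 1; exact Nat.mod_add_div m K
  have hbid : u ≤ X (adv u) (t + 1) := by
    rw [hXs _ (t+1) (Nat.le_add_left 1 t)]
    simp only [Nat.add_sub_cancel]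
    calc u ≤ r * q ^ m := Nat.find_spec (hgex u)
    _ = r * q ^ (((adv u : Fin K)):ℕ) * β ^ t := by rw [mul_assoc, hqm]
  have h := hex (adv u) u
  rw [hcost _ u h]
  have hfind : Nat.find h ≤ t + 1 := Nat.find_le hbid
  have hmonopow : β ^ (Nat.find h) ≤ β ^ (t+1) := pow_le_pow_right₀ hβ1.le hfind
  rcases Nat.eq_zero_or_pos m with hm0 | hm1
  · -- m = 0 : a = 0, t = 0
    have ha0 : ((adv u : Fin K) : ℕ) = 0 := by omega
    have ht0 : t = 0 := by rw [ht, hm0]; simp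
    rw [ha0, pow_zero, mul_one]
    have hur : u ≤ r := by
      have := Nat.find_spec (hgex u)
      rw [← hm, hm0] at this
      simpa using this
    have hb1 : β ^ (Nat.find h) ≤ β ^ 1 := by
      calc β ^ (Nat.find h) ≤ β ^ (t+1) := hmonopow
      _ = β ^ 1 := by rw [ht0]
    rw [pow_one] at hb1
    have : (β ^ (Nat.find h) - 1) / (β - 1) ≤ 1 := by
      rw [div_le_one hβ1']
      linarith
    nlinarith
  · -- m ≥ 1
    have hprev : r * q ^ (m - 1) < u := by
      have := Nat.find_min (hgex u) (show m - 1 < m by omega)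
      rw [← hm] at *
      exact not_le.mp this
    have hqpow : q ^ ((adv u : Fin K):ℕ) * β ^ (t+1) = q ^ (m-1) * (q * β) := by
      calc q ^ ((adv u : Fin K):ℕ) * β ^ (t+1)
          = (q ^ ((adv u : Fin K):ℕ) * β ^ t) * β := by rw [pow_succ]; ring
      _ = q ^ m * β := by rw [hqm]
      _ = q ^ (m-1) * q * β := by
            congr 1
            rw [← pow_succ]
            congr 1
            omega
      _ = q ^ (m-1) * (q * β) := by ring
    calc r * q ^ ((adv u : Fin K):ℕ) * ((β ^ Nat.find h - 1) / (β - 1))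
        ≤ r * q ^ ((adv u : Fin K):ℕ) * (β ^ (t+1) / (β - 1)) := by
          apply mul_le_mul_of_nonneg_left _ (by positivity)
          apply div_le_div_of_nonneg_right ?_ hβ1'.le
          linarith
    _ = r * q ^ (m-1) * (q * β / (β - 1)) := by
          rw [show r * q ^ ((adv u : Fin K):ℕ) * (β ^ (t+1) / (β - 1))
            = r * (q ^ ((adv u : Fin K):ℕ) * β ^ (t+1)) / (β - 1) from by ring, hqpow]
          ring
    _ = r * q ^ (m-1) * r := by rw [← hr]
    _ ≤ r * u := by nlinarith

/-- with `k` advice bits there is an `(r, w)`-competitive online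
bidding strategy, for the claimed value of `r`. -/
theorem bidding_upper_bound_k_bits (w : ℝ) (hw : 4 ≤ w) (k : ℕ) (K r : ℝ)
    (hK : K = 2 ^ k)
    (hr : r = if w ≤ (1 + K) ^ 2 / K
      then (w + Real.sqrt (w ^ 2 - 4 * w)) ^ (1 + 1 / K) /
        ((2 : ℝ) ^ (1 / K) * (w + Real.sqrt (w ^ 2 - 4 * w) - 2))
      else (1 + K) ^ (1 + 1 / K) / K) :
    ∃ (X : Fin (2 ^ k) → ℕ → ℝ) (adv : ℝ → Fin (2 ^ k)),
      (∀ a : Fin (2 ^ k),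
        X a 0 = 1 ∧ StrictMono (X a) ∧ Filter.Tendsto (X a) Filter.atTop Filter.atTop) ∧
      (∀ (a : Fin (2 ^ k)) (u : ℝ), 1 ≤ u → bidCost (X a) u ≤ w * u) ∧
      (∀ u : ℝ, 1 ≤ u → bidCost (X (adv u)) u ≤ r * u) := by
  have hN : 0 < 2 ^ k := by positivity
  have hKN : K = ((2 ^ k : ℕ) : ℝ) := by rw [hK]; push_cast; ring
  have hK1 : (1 : ℝ) ≤ K := by
    rw [hK]; exact one_le_pow₀ (by norm_num)
  have hK0 : (0 : ℝ) < K := by linarith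
  by_cases hcase : w ≤ (1 + K) ^ 2 / K
  · -- small w : β is the root of β² = w(β-1)
    set s := Real.sqrt (w ^ 2 - 4 * w) with hs
    have hs0 : 0 ≤ s := Real.sqrt_nonneg _
    have hs2 : s ^ 2 = w ^ 2 - 4 * w := Real.sq_sqrt (by nlinarith)
    set β := (w + s) / 2 with hβ
    have hβ2 : 2 ≤ β := by rw [hβ]; nlinarith
    have hβ1' : (0 : ℝ) < β - 1 := by linarith
    have hβeq : β ^ 2 = w * (β - 1) := by rw [hβ]; linear_combination hs2 / 4
    have hβw : β ^ 2 / (β - 1) ≤ w := by rw [div_le_iff₀ hβ1']; linarith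
    have hr' : r = β ^ ((1 : ℝ) / ((2 ^ k : ℕ) : ℝ)) * β / (β - 1) := by
      rw [hr, if_pos hcase, ← hKN]
      have h2β : w + s = 2 * β := by rw [hβ]; ring
      rw [h2β]
      have hpos : (0 : ℝ) < 2 * β := by linarith
      rw [Real.rpow_add hpos, Real.rpow_one,
        Real.mul_rpow (by norm_num) (by linarith : (0:ℝ) ≤ β)]
      have h2c : (0 : ℝ) < (2 : ℝ) ^ ((1:ℝ) / K) := Real.rpow_pos_of_pos two_pos _
      rw [show 2 * β - 2 = 2 * (β - 1) from by ring]
      field_simp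
    exact bidding_aux w hw (2 ^ k) hN β r hβ2 hβw hr'
  · -- large w : β = 1 + K
    set β := 1 + K with hβ
    have hβ2 : 2 ≤ β := by rw [hβ]; linarith
    have hβ1' : β - 1 = K := by rw [hβ]; ring
    have hβw : β ^ 2 / (β - 1) ≤ w := by
      rw [hβ1', hβ]
      linarith [le_of_not_ge hcase]
    have hr' : r = β ^ ((1 : ℝ) / ((2 ^ k : ℕ) : ℝ)) * β / (β - 1) := by
      rw [hr, if_neg hcase, ← hKN, hβ1']
      rw [show (1 : ℝ) + 1 / K = 1 + 1 / K from rfl]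
      rw [Real.rpow_add (by linarith : (0:ℝ) < 1 + K), Real.rpow_one, hβ]
      ring
    exact bidding_aux w hw (2 ^ k) hN β r hβ2 hβw hr'
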